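/- For integers 4 ≤ M ≤ 2^{L/(2(2K+1))} and K ≥ 1 (with 2K+1 dividing L), log binom(2^L, M) − log( binom(2^{L/(2K+1)−1}, M)^{2K+1} · (M!)^{2K} · 2^{(2K+1)(M − 2K·log(ML) − 2K·log M)} ) ≤ (2K+1)·log e + 2K(2K+1)·log(ML) + 2K(2K+1)·log M. -/

import Mathlib

open Real Finset

lemma my_log_le_half (x : ℝ) (hx : 1 ≤ x) : Real.log x ≤ (x - 1/x)/2 := by
  rcases eq_or_lt_of_le hx with h | h
  · simp [← h]
  · have hlog : 0 < Real.log x := Real.log_pos h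
    have h2 := Real.self_lt_sinh_iff.mpr hlog
    rw [Real.sinh_eq, Real.exp_log (by linarith), Real.exp_neg,
      Real.exp_log (by linarith)] at h2
    rw [one_div]
    linarith

lemma my_term (a : ℝ) (Mr : ℝ) (i : ℕ) (hMr : 4 ≤ Mr) (hi : (i:ℝ) ≤ Mr - 1)
    (ha : Mr ^ 2 ≤ 2 * a) :
    Real.log a - Real.log (a - i) ≤
      (i:ℝ) * (1/a + (Mr - 1)/(2*a*(a - Mr + 1))) := by
  have hi0 : (0:ℝ) ≤ i := Nat.cast_nonneg i
  have hu : 0 < a - Mr + 1 := by nlinarith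
  have hb : 0 < a - i := by nlinarith
  have ha0 : 0 < a := by nlinarith
  have hx1 : 1 ≤ a / (a - i) := (one_le_div hb).mpr (by linarith)
  have h1 : Real.log a - Real.log (a - i) ≤ (a/(a-i) - (a-i)/a)/2 := by
    have := my_log_le_half (a/(a-i)) hx1
    rw [Real.log_div (ne_of_gt ha0) (ne_of_gt hb), one_div_div] at this
    exact this
  refine h1.trans ?_
  calc (a/(a-i) - (a-i)/a)/2 = (i:ℝ)/a + ((i:ℝ)*(i:ℝ))/(2*a*(a-(i:ℝ))) := by
        field_simp
        ring
    _ ≤ (i:ℝ)/a + ((i:ℝ)*(Mr-1))/(2*a*(a - Mr + 1)) := by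
        gcongr
        all_goals nlinarith [mul_le_mul_of_nonneg_left hi hi0]
    _ = (i:ℝ) * (1/a + (Mr - 1)/(2*a*(a - Mr + 1))) := by ring


lemma my_desc (m M : ℕ) (hM4 : 4 ≤ M) (h2 : ((M:ℝ))^2 ≤ 2*(m:ℝ)) :
    ((m:ℝ))^M ≤ Real.exp 1 * (m.descFactorial M : ℝ) := by
  have hMr : (4:ℝ) ≤ (M:ℝ) := by exact_mod_cast hM4
  have hu : (0:ℝ) < (m:ℝ) - M + 1 := by nlinarith
  have hm0 : (0:ℝ) < (m:ℝ) := by nlinarith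
  have hMm : M ≤ m := by
    have : (M:ℝ) ≤ (m:ℝ) := by nlinarith
    exact_mod_cast this
  have hd0 : 0 < (m.descFactorial M : ℝ) := by
    rw [Nat.descFactorial_eq_factorial_mul_choose]
    have := Nat.choose_pos hMm
    positivity
  have hprod : (m.descFactorial M : ℝ) = ∏ i ∈ range M, ((m:ℝ) - i) := by
    rw [Nat.descFactorial_eq_prod_range, Nat.cast_prod]
    refine Finset.prod_congr rfl (fun i hi => ?_)
    have hiM : i ≤ m := le_trans (le_of_lt (mem_range.mp hi)) hMm
    push_cast [Nat.cast_sub hiM]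
    ring
  have hfacpos : ∀ i ∈ range M, (0:ℝ) < (m:ℝ) - i := by
    intro i hi
    have : (i:ℝ) < M := by exact_mod_cast mem_range.mp hi
    nlinarith
  set c : ℝ := 1/(m:ℝ) + ((M:ℝ) - 1)/(2*(m:ℝ)*((m:ℝ) - (M:ℝ) + 1)) with hc
  have hsum_id : ∑ i ∈ range M, (i:ℝ) = (M:ℝ)*((M:ℝ)-1)/2 := by
    have h := Finset.sum_range_id_mul_two M
    have h2 : ((∑ i ∈ range M, i : ℕ) : ℝ) * 2 = (M:ℝ) * ((M:ℝ) - 1) := by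
      rw [← Nat.cast_ofNat, ← Nat.cast_mul, h]
      push_cast [Nat.cast_sub (by omega : 1 ≤ M)]
      ring
    push_cast at h2 ⊢
    linarith
  have hckey : (M:ℝ)*((M:ℝ)-1)/2 * c ≤ 1 := by
    rw [hc, div_add_div _ _ (ne_of_gt hm0)
        (ne_of_gt (by positivity : (0:ℝ) < 2*(m:ℝ)*((m:ℝ) - (M:ℝ) + 1))),
      div_mul_div_comm, div_le_one (by positivity)]
    nlinarith [mul_nonneg (by nlinarith : (0:ℝ) ≤ 2*(m:ℝ) - (M:ℝ)^2) hu.le,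
      mul_nonneg (by nlinarith : (0:ℝ) ≤ 2*(m:ℝ) - (M:ℝ)^2) (by linarith : (0:ℝ) ≤ (M:ℝ))]
  have hterms : ∑ i ∈ range M, (Real.log (m:ℝ) - Real.log ((m:ℝ) - i)) ≤ 1 := by
    calc ∑ i ∈ range M, (Real.log (m:ℝ) - Real.log ((m:ℝ) - i))
        ≤ ∑ i ∈ range M, (i:ℝ) * c := by
          refine Finset.sum_le_sum (fun i hi => ?_)
          refine my_term (m:ℝ) (M:ℝ) i hMr ?_ h2
          have hi1 : i + 1 ≤ M := mem_range.mp hi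
          have : ((i:ℝ) + 1) ≤ M := by exact_mod_cast hi1
          linarith
      _ = ((M:ℝ)*((M:ℝ)-1)/2) * c := by rw [← Finset.sum_mul, hsum_id]
      _ ≤ 1 := hckey
  have hlogle : (M:ℝ) * Real.log m ≤ 1 + Real.log ((m.descFactorial M : ℝ)) := by
    rw [hprod, Real.log_prod (fun i hi => (hfacpos i hi).ne')]
    rw [Finset.sum_sub_distrib, Finset.sum_const, card_range, nsmul_eq_mul] at hterms
    linarith
  calc ((m:ℝ))^M = Real.exp (Real.log ((m:ℝ)^M)) := (Real.exp_log (by positivity)).symm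
    _ ≤ Real.exp (1 + Real.log ((m.descFactorial M : ℝ))) := by
        rw [Real.log_pow]
        exact Real.exp_le_exp.mpr (by push_cast; linarith)
    _ = Real.exp 1 * (m.descFactorial M : ℝ) := by rw [Real.exp_add, Real.exp_log hd0]


lemma my_blog (C F E : ℝ) (hC : 0 < C) (hF : 0 < F) (a b : ℕ) :
    Real.logb 2 (C^a * F^b * (2:ℝ)^E)
      = (a:ℝ) * Real.logb 2 C + (b:ℝ) * Real.logb 2 F + E := by
  rw [Real.logb_mul (mul_ne_zero (pow_ne_zero _ hC.ne') (pow_ne_zero _ hF.ne'))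
      (Real.rpow_pos_of_pos two_pos _).ne',
    Real.logb_mul (pow_ne_zero _ hC.ne') (pow_ne_zero _ hF.ne'),
    Real.logb_pow, Real.logb_pow,
    Real.logb_rpow (by norm_num) (by norm_num)]

set_option maxHeartbeats 2000000 in
theorem stmt_17 (L M K : ℕ) (hK : 1 ≤ K) (hM4 : 4 ≤ M) (hdvd : (2 * K + 1) ∣ L)
    (hM : (M : ℝ) ≤ (2 : ℝ) ^ ((L : ℝ) / (2 * (2 * (K : ℝ) + 1)))) :
    Real.logb 2 ((2 ^ L).choose M)
      - Real.logb 2 ((((2 ^ (L / (2 * K + 1) - 1)).choose M : ℝ)) ^ (2 * K + 1)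
          * (M.factorial : ℝ) ^ (2 * K)
          * (2 : ℝ) ^ ((2 * (K : ℝ) + 1) *
              ((M : ℝ) - 2 * K * Real.logb 2 (M * L) - 2 * K * Real.logb 2 M)))
      ≤ (2 * (K : ℝ) + 1) * Real.logb 2 (Real.exp 1)
        + 2 * K * (2 * (K : ℝ) + 1) * Real.logb 2 (M * L)
        + 2 * K * (2 * (K : ℝ) + 1) * Real.logb 2 M := by
  obtain ⟨ℓ, hL⟩ := hdvd
  have hLdiv : L / (2 * K + 1) = ℓ := by
    rw [hL]; exact Nat.mul_div_cancel_left ℓ (by omega)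
  rw [hLdiv]
  have hMr4 : (4:ℝ) ≤ (M:ℝ) := by exact_mod_cast hM4
  have hLr : (L:ℝ) = (2*(K:ℝ)+1) * (ℓ:ℝ) := by exact_mod_cast hL
  have htR0 : (0:ℝ) < 2*(K:ℝ)+1 := by positivity
  have hMexp : (M:ℝ) ≤ (2:ℝ) ^ ((ℓ:ℝ)/2) := by
    have hhalf : (L:ℝ)/(2*(2*(K:ℝ)+1)) = (ℓ:ℝ)/2 := by
      rw [hLr]; field_simp
    rwa [hhalf] at hM
  have h22 : (2:ℝ) ^ (2:ℝ) = 4 := by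
    rw [show (2:ℝ) = ((2:ℕ):ℝ) by norm_num, Real.rpow_natCast]; norm_num
  have hl4 : 4 ≤ ℓ := by
    have h4 : (2:ℝ)^(2:ℝ) ≤ (2:ℝ)^((ℓ:ℝ)/2) := by rw [h22]; linarith
    have h5 : (2:ℝ) ≤ (ℓ:ℝ)/2 := (Real.rpow_le_rpow_left_iff one_lt_two).mp h4
    have : (4:ℝ) ≤ (ℓ:ℝ) := by linarith
    exact_mod_cast this
  set m : ℕ := 2 ^ (ℓ - 1) with hm
  have hm2 : 2 * m = 2 ^ ℓ := by
    rw [hm, ← pow_succ']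
    congr 1
    omega
  have hM2m : (M:ℝ)^2 ≤ 2*(m:ℝ) := by
    have e : (2:ℝ)^((ℓ:ℝ)/2) * (2:ℝ)^((ℓ:ℝ)/2) = 2*(m:ℝ) := by
      rw [← Real.rpow_add two_pos, show (ℓ:ℝ)/2 + (ℓ:ℝ)/2 = (ℓ:ℝ) by ring,
        Real.rpow_natCast]
      exact_mod_cast congrArg (fun n : ℕ => (n:ℝ)) hm2.symm
    have := mul_le_mul hMexp hMexp (by linarith) (by positivity)
    rw [e] at this
    nlinarith
  have hMm : M ≤ m := by
    have : (M:ℝ) ≤ (m:ℝ) := by nlinarith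
    exact_mod_cast this
  have hC0 : (0:ℝ) < (m.choose M : ℝ) := by exact_mod_cast Nat.choose_pos hMm
  have hF0 : (0:ℝ) < (M.factorial : ℝ) := by exact_mod_cast M.factorial_pos
  have hA0 : (0:ℝ) < ((2^L).choose M : ℝ) := by
    have hlL : ℓ ≤ L := by
      calc ℓ = 1 * ℓ := (one_mul ℓ).symm
        _ ≤ (2*K+1) * ℓ := Nat.mul_le_mul_right ℓ (by omega)
        _ = L := hL.symm
    have : M ≤ 2 ^ L := le_trans hMm (Nat.pow_le_pow_right (by norm_num) (by omega))
    exact_mod_cast Nat.choose_pos this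
  have h2log : (0:ℝ) < Real.log 2 := Real.log_pos one_lt_two
  -- step 2
  have e1 : Real.log ((2^L).choose M : ℝ) + Real.log (M.factorial : ℝ)
      ≤ (M:ℝ)*(L:ℝ)*Real.log 2 := by
    have hAF : ((2^L).choose M * M.factorial : ℕ) ≤ (2^L)^M := by
      rw [mul_comm, ← Nat.descFactorial_eq_factorial_mul_choose]
      exact Nat.descFactorial_le_pow _ _
    have hAFR : ((2^L).choose M : ℝ) * (M.factorial : ℝ) ≤ ((2:ℝ)^L)^M := by
      exact_mod_cast hAF
    have hlog := Real.log_le_log (by positivity) hAFR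
    rw [Real.log_mul hA0.ne' hF0.ne', Real.log_pow, Real.log_pow] at hlog
    calc Real.log ((2^L).choose M : ℝ) + Real.log (M.factorial : ℝ)
        ≤ (M:ℕ) * ((L:ℕ) * Real.log 2) := hlog
      _ = (M:ℝ)*(L:ℝ)*Real.log 2 := by push_cast; ring
  -- step 3
  have e2 : (M:ℝ)*(((ℓ:ℝ)-1))*Real.log 2
      ≤ 1 + Real.log (m.choose M : ℝ) + Real.log (M.factorial : ℝ) := by
    have hd := my_desc m M hM4 hM2m
    have hd0 : (0:ℝ) < (m.descFactorial M : ℝ) := by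
      rw [Nat.descFactorial_eq_factorial_mul_choose]
      push_cast
      positivity
    have hm0 : (0:ℝ) < (m:ℝ) := by positivity
    have hlog := Real.log_le_log (by positivity) hd
    rw [Real.log_pow, Real.log_mul (Real.exp_pos 1).ne' hd0.ne', Real.log_exp,
      Nat.descFactorial_eq_factorial_mul_choose, Nat.cast_mul,
      Real.log_mul hF0.ne' hC0.ne'] at hlog
    have hlogm : Real.log (m:ℝ) = ((ℓ:ℝ)-1)*Real.log 2 := by
      rw [hm]
      push_cast
      rw [Real.log_pow]
      have : ((ℓ - 1 : ℕ):ℝ) = (ℓ:ℝ) - 1 := by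
        push_cast [Nat.cast_sub (by omega : 1 ≤ ℓ)]
        ring
      rw [this]
    rw [hlogm] at hlog
    nlinarith [hlog]
  -- core inequality in log form
  have e2' := mul_le_mul_of_nonneg_left e2 htR0.le
  have hLml : (M:ℝ)*(L:ℝ)*Real.log 2 = (2*(K:ℝ)+1)*((M:ℝ)*(ℓ:ℝ)*Real.log 2) := by
    rw [hLr]; ring
  have core : Real.log ((2^L).choose M : ℝ)
      ≤ (2*(K:ℝ)+1)*Real.log (m.choose M : ℝ) + (2*(K:ℝ))*Real.log (M.factorial : ℝ)
        + (2*(K:ℝ)+1)*(M:ℝ)*Real.log 2 + (2*(K:ℝ)+1) := by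
    nlinarith [e1, e2', hLml]
  -- logb form
  have hgoal' : Real.logb 2 ((2^L).choose M : ℝ)
      ≤ (2*(K:ℝ)+1)*Real.logb 2 (m.choose M : ℝ) + (2*(K:ℝ))*Real.logb 2 (M.factorial : ℝ)
        + (2*(K:ℝ)+1)*(M:ℝ) + (2*(K:ℝ)+1)*(1/Real.log 2) := by
    simp only [Real.logb]
    rw [div_le_iff₀ h2log]
    have hexp : ((2*(K:ℝ)+1)*(Real.log (m.choose M : ℝ)/Real.log 2)
        + (2*(K:ℝ))*(Real.log (M.factorial : ℝ)/Real.log 2)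
        + (2*(K:ℝ)+1)*(M:ℝ) + (2*(K:ℝ)+1)*(1/Real.log 2)) * Real.log 2
        = (2*(K:ℝ)+1)*Real.log (m.choose M : ℝ) + (2*(K:ℝ))*Real.log (M.factorial : ℝ)
        + (2*(K:ℝ)+1)*(M:ℝ)*Real.log 2 + (2*(K:ℝ)+1) := by
      field_simp
    rw [hexp]
    exact core
  rw [my_blog _ _ _ hC0 hF0 (2*K+1) (2*K)]
  have hlogbe : Real.logb 2 (Real.exp 1) = 1 / Real.log 2 := by
    rw [Real.logb, Real.log_exp]
  rw [hlogbe]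
  push_cast
  linarith [hgoal']
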